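/- arXiv:1308.0675 — 3 statements merged into one kernel-verified Lean document; each statement's English description precedes it below -/
import Mathlib

section
/- If G is a connected oriented graph on vertex set V and W, W' ⊆ V satisfy G_W = G_{W'}, then W' = W or W' = V ∖ W. -/
/-- A digraph on a vertex type `V`: a set of ordered pairs of vertices,
given by its adjacency relation. -/
structure Dgraph (V : Type*) where
  Adj : V → V → Prop

namespace Dgraph

variable {V W : Type*}

/-- Switching at a vertex `v`: every edge incident with `v` is reversed. -/
def switchV (G : Dgraph V) (v : V) : Dgraph V :=
  ⟨fun a b => ((a = v ∨ b = v) ∧ G.Adj b a) ∨ (¬(a = v ∨ b = v) ∧ G.Adj a b)⟩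

/-- Switching about a set `S`: every edge with exactly one endpoint in `S` is reversed. -/
def switchSet (G : Dgraph V) (S : Set V) : Dgraph V :=
  ⟨fun a b => (((a ∈ S) ↔ (b ∈ S)) ∧ G.Adj a b) ∨ (¬((a ∈ S) ↔ (b ∈ S)) ∧ G.Adj b a)⟩

/-- Relabelling of a digraph by a permutation: `(γ a, γ b)` is an edge of `G.relabel γ`
whenever `(a,b)` is an edge of `G`. -/
def relabel (G : Dgraph V) (γ : Equiv.Perm V) : Dgraph V :=
  ⟨fun a b => G.Adj (γ.symm a) (γ.symm b)⟩

/-- Isomorphism of digraphs (possibly on different vertex types). -/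
def DIso (G : Dgraph V) (H : Dgraph W) : Prop :=
  ∃ e : V ≃ W, ∀ a b, G.Adj a b ↔ H.Adj (e a) (e b)

/-- An oriented graph: a digraph with no loops and no pair of opposite edges. -/
def IsOriented (G : Dgraph V) : Prop := ∀ a b, G.Adj a b → ¬ G.Adj b a

/-- The underlying undirected (simple) graph of a digraph. -/
def underlying (G : Dgraph V) : SimpleGraph V where
  Adj a b := a ≠ b ∧ (G.Adj a b ∨ G.Adj b a)
  symm := ⟨fun a b ⟨h1, h2⟩ => ⟨h1.symm, h2.symm⟩⟩
  loopless := ⟨fun a ⟨h1, _⟩ => h1 rfl⟩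

/-- The vertex set of the connected component (of the underlying graph) containing `v`. -/
def compSet (G : Dgraph V) (v : V) : Set V := {x | (underlying G).Reachable v x}

/-- The induced subdigraph on a set of vertices. -/
def induce (G : Dgraph V) (S : Set V) : Dgraph S := ⟨fun a b => G.Adj a b⟩

/-- A digraph is switching-stable if each vertex switching is isomorphic to it. -/
def SwitchStable (G : Dgraph V) : Prop := ∀ v, DIso (G.switchV v) G

/-- Isomorphism as a setoid on digraphs with a fixed vertex type. -/
def isoSetoid (V : Type*) : Setoid (Dgraph V) where
  r := DIso
  iseqv := by
    refine ⟨fun G => ⟨Equiv.refl V, fun a b => Iff.rfl⟩, ?_, ?_⟩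
    · rintro G H ⟨e, h⟩
      exact ⟨e.symm, fun a b => by simpa using (h (e.symm a) (e.symm b)).symm⟩
    · rintro G H K ⟨e, h⟩ ⟨f, h2⟩
      exact ⟨e.trans f, fun a b => (h a b).trans (h2 _ _)⟩

/-- The switching deck: the multiset of isomorphism classes of vertex switchings. -/
def deck (G : Dgraph V) [Fintype V] : Multiset (Quotient (isoSetoid V)) :=
  Finset.univ.val.map fun v => Quotient.mk (isoSetoid V) (G.switchV v)

/-- The `t`-deck: the deck augmented by `t` copies of the isomorphism class of `G`. -/
def tdeck (G : Dgraph V) [Fintype V] (t : ℕ) : Multiset (Quotient (isoSetoid V)) :=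
  Multiset.replicate t (Quotient.mk (isoSetoid V) G) + G.deck

end Dgraph

open Dgraph in
/-- For a connected oriented graph, `G_W = G_{W'}` implies `W' = W` or `W' = V ∖ W`. -/
theorem switchSet_eq_iff_of_connected {V : Type*} (G : Dgraph V)
    (hor : IsOriented G) (hconn : G.underlying.Connected) (W W' : Set V)
    (h : G.switchSet W = G.switchSet W') :
    W' = W ∨ W' = Wᶜ := by
  classical
  have hAdjEq : ∀ a b, (G.switchSet W).Adj a b ↔ (G.switchSet W').Adj a b := by
    intro a b; rw [h]
  have key : ∀ a b, G.underlying.Adj a b →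
      ((a ∈ W ↔ b ∈ W) ↔ (a ∈ W' ↔ b ∈ W')) := by
    intro a b hab
    rcases hab.2 with hab' | hba
    · have hno := hor a b hab'
      have := hAdjEq a b
      simp only [switchSet, hab', hno, and_true, and_false, or_false] at this
      tauto
    · have hno := hor b a hba
      have := hAdjEq a b
      simp only [switchSet, hba, hno, and_true, and_false, false_or, or_false] at this
      tauto
  have step : ∀ a b, G.underlying.Adj a b →
      ((a ∈ W ↔ a ∈ W') ↔ (b ∈ W ↔ b ∈ W')) := by
    intro a b hab
    have := key a b hab
    tauto
  have rech : ∀ a b, G.underlying.Reachable a b →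
      ((a ∈ W ↔ a ∈ W') ↔ (b ∈ W ↔ b ∈ W')) := by
    intro a b hr
    obtain ⟨p⟩ := hr
    induction p with
    | nil => tauto
    | cons hadj _ ih => exact (step _ _ hadj).trans ih
  obtain ⟨v₀⟩ := hconn.nonempty
  by_cases hv : v₀ ∈ W ↔ v₀ ∈ W'
  · left
    ext x
    have := rech v₀ x (hconn v₀ x)
    tauto
  · right
    ext x
    have := rech v₀ x (hconn v₀ x)
    simp only [Set.mem_compl_iff]
    tauto
end

section
/- For any digraph D on vertex set V, the set Γ(D) = { γ ∈ Sym(V) : D_W = D^γ for some W ⊆ V } is a subgroup of the symmetric group on V; moreover it contains the automorphism group of D and is contained in the automorphism group of the underlying undirected graph of D. -/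
private lemma Dgraph.ext' {V : Type*} {G H : Dgraph V} (h : ∀ a b, G.Adj a b ↔ H.Adj a b) :
    G = H := by
  cases G; cases H
  simp only [Dgraph.mk.injEq]
  funext a b
  exact propext (h a b)

private lemma Dgraph.adj_of_eq {V : Type*} {G H : Dgraph V} (h : G = H) :
    ∀ a b, G.Adj a b ↔ H.Adj a b := by subst h; exact fun _ _ => Iff.rfl

open Dgraph in
/-- The set `Γ(D) = {γ | D_W = D^γ for some W}` is a subgroup of `Sym(V)`, it contains
the automorphism group of `D`, and is contained in the automorphism group of the
underlying undirected graph of `D`. -/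
theorem gamma_is_subgroup {V : Type*} (D : Dgraph V) :
    (∃ Γ : Subgroup (Equiv.Perm V),
        (Γ : Set (Equiv.Perm V)) = {γ | ∃ S : Set V, D.switchSet S = D.relabel γ}) ∧
      {γ : Equiv.Perm V | D.relabel γ = D} ⊆
        {γ | ∃ S : Set V, D.switchSet S = D.relabel γ} ∧
      {γ : Equiv.Perm V | ∃ S : Set V, D.switchSet S = D.relabel γ} ⊆
        {γ | ∀ a b, D.underlying.Adj a b ↔ D.underlying.Adj (γ a) (γ b)} := by
  refine ⟨⟨{ carrier := {γ | ∃ S : Set V, D.switchSet S = D.relabel γ}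
           , one_mem' := ⟨∅, Dgraph.ext' fun a b => by
               simp [Dgraph.switchSet, Dgraph.relabel]; exact Iff.rfl⟩
           , mul_mem' := ?_
           , inv_mem' := ?_ }, rfl⟩, ?_, ?_⟩
  · rintro γ δ ⟨S, hS⟩ ⟨T, hT⟩
    refine ⟨{a | ¬ (a ∈ S ↔ γ.symm a ∈ T)}, Dgraph.ext' fun a b => ?_⟩
    have h1 := Dgraph.adj_of_eq hS a b
    have h1' := Dgraph.adj_of_eq hS b a
    have h2 := Dgraph.adj_of_eq hT (γ.symm a) (γ.symm b)
    have e1 : (γ * δ).symm a = δ.symm (γ.symm a) := rfl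
    have e2 : (γ * δ).symm b = δ.symm (γ.symm b) := rfl
    simp only [Dgraph.switchSet, Dgraph.relabel, Set.mem_setOf_eq, e1, e2] at h1 h1' h2 ⊢
    by_cases pa : a ∈ S <;> by_cases pb : b ∈ S <;>
      by_cases qa : γ.symm a ∈ T <;> by_cases qb : γ.symm b ∈ T <;>
      simp only [pa, pb, qa, qb, iff_true, true_iff, iff_false, false_iff, not_not,
        not_true, not_false_iff, true_and, and_true, false_and, and_false, not_iff_self,
        true_or, or_true, false_or, or_false] at h1 h1' h2 ⊢
    all_goals tauto
  · rintro γ ⟨S, hS⟩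
    refine ⟨{a | γ a ∈ S}, Dgraph.ext' fun a b => ?_⟩
    have h1 := Dgraph.adj_of_eq hS (γ a) (γ b)
    have h2 := Dgraph.adj_of_eq hS (γ b) (γ a)
    have e1 : γ⁻¹.symm a = γ a := rfl
    have e2 : γ⁻¹.symm b = γ b := rfl
    simp only [Dgraph.switchSet, Dgraph.relabel, Set.mem_setOf_eq, e1, e2,
      Equiv.symm_apply_apply] at h1 h2 ⊢
    by_cases pa : γ a ∈ S <;> by_cases pb : γ b ∈ S <;>
      simp only [pa, pb, iff_true, true_iff, iff_false, false_iff, not_not,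
        not_true, not_false_iff, true_and, and_true, false_and, and_false, not_iff_self,
        true_or, or_true, false_or, or_false] at h1 h2 ⊢
    all_goals tauto
  · intro γ hγ
    exact ⟨∅, (Dgraph.ext' fun a b => by simp [Dgraph.switchSet]).trans hγ.symm⟩
  · rintro γ ⟨S, hS⟩ a b
    have h1 := Dgraph.adj_of_eq hS (γ a) (γ b)
    have h2 := Dgraph.adj_of_eq hS (γ b) (γ a)
    simp only [Dgraph.switchSet, Dgraph.relabel, Equiv.symm_apply_apply] at h1 h2
    show a ≠ b ∧ _ ↔ γ a ≠ γ b ∧ _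
    simp only [ne_eq, EmbeddingLike.apply_eq_iff_eq]
    by_cases pa : γ a ∈ S <;> by_cases pb : γ b ∈ S <;>
      simp only [pa, pb, iff_true, true_iff, iff_false, false_iff, not_not,
        not_true, not_false_iff, true_and, and_true, false_and, and_false, not_iff_self,
        true_or, or_true, false_or, or_false] at h1 h2 ⊢
    all_goals tauto
end

section
/- If D is a connected switching-stable oriented graph on n vertices, then 2^{n-1} divides n! (equivalently, 2^{n-1} divides |Aut(G)| where G is the underlying undirected graph); in particular n is a power of 2. -/
namespace Dgraph

variable {V : Type*}

lemma ext'_s10 {G H : Dgraph V} (h : ∀ a b, G.Adj a b ↔ H.Adj a b) : G = H := by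
  cases G; cases H
  simp only [mk.injEq]
  funext a b
  exact propext (h a b)

lemma adj_iff_of_eq {G H : Dgraph V} (h : G = H) : ∀ a b, (G.Adj a b ↔ H.Adj a b) := by
  subst h; exact fun a b => Iff.rfl

lemma switchV_eq_switchSet (G : Dgraph V) (v : V) : G.switchV v = G.switchSet {v} := by
  apply ext'_s10
  intro a b
  simp only [switchV, switchSet, Set.mem_singleton_iff]
  by_cases ha : a = v <;> by_cases hb : b = v <;> subst_vars <;> tauto

lemma switchSet_switchSet (G : Dgraph V) (S T : Set V) :
    (G.switchSet S).switchSet T = G.switchSet {x | ¬(x ∈ S ↔ x ∈ T)} := by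
  apply ext'_s10
  intro a b
  simp only [switchSet, Set.mem_setOf_eq]
  by_cases ha : a ∈ S <;> by_cases hb : b ∈ S <;> by_cases ha' : a ∈ T <;>
    by_cases hb' : b ∈ T <;> simp [ha, hb, ha', hb'] <;> tauto

lemma switchSet_empty (G : Dgraph V) : G.switchSet ∅ = G := by
  apply ext'_s10; intro a b; simp [switchSet]

lemma switchSet_univ (G : Dgraph V) : G.switchSet Set.univ = G := by
  apply ext'_s10; intro a b; simp [switchSet]

lemma switchSet_trivial (G : Dgraph V) {S : Set V} (h : S = ∅ ∨ S = Set.univ) :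
    G.switchSet S = G := by
  rcases h with h | h <;> subst h
  · exact switchSet_empty G
  · exact switchSet_univ G

lemma relabel_one (G : Dgraph V) : G.relabel 1 = G := by
  apply ext'_s10; intro a b; simp [relabel, Equiv.Perm.one_def]

lemma relabel_relabel (G : Dgraph V) (γ δ : Equiv.Perm V) :
    (G.relabel δ).relabel γ = G.relabel (γ * δ) := by
  apply ext'_s10; intro a b; simp [relabel, Equiv.Perm.mul_def]

lemma relabel_switchSet (G : Dgraph V) (S : Set V) (γ : Equiv.Perm V) :
    (G.switchSet S).relabel γ = (G.relabel γ).switchSet {x | γ.symm x ∈ S} := by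
  apply ext'_s10; intro a b; simp only [relabel, switchSet, Set.mem_setOf_eq]

/-- In a connected oriented digraph, only the trivial switchings fix the digraph. -/
lemma switchSet_eq_self_iff {G : Dgraph V} (hor : IsOriented G)
    (hconn : G.underlying.Connected) (S : Set V) :
    G.switchSet S = G ↔ (S = ∅ ∨ S = Set.univ) := by
  constructor
  · intro h
    have key : ∀ a b, G.underlying.Adj a b → (a ∈ S ↔ b ∈ S) := by
      rintro a b ⟨hne, hadj | hadj⟩
      · have := (adj_iff_of_eq h a b).2 hadj
        rcases this with ⟨hiff, _⟩ | ⟨_, hba⟩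
        · exact hiff
        · exact absurd hba (hor a b hadj)
      · have := (adj_iff_of_eq h b a).2 hadj
        rcases this with ⟨hiff, _⟩ | ⟨_, hba⟩
        · exact hiff.symm
        · exact absurd hba (hor b a hadj)
    have reach : ∀ a b : V, G.underlying.Reachable a b → (a ∈ S ↔ b ∈ S) := by
      intro a b hr
      rcases hr with ⟨w⟩
      induction w with
      | nil => exact Iff.rfl
      | cons h p ih => exact (key _ _ h).trans ih
    by_cases he : S = ∅
    · exact Or.inl he
    · right
      obtain ⟨s, hs⟩ := Set.nonempty_iff_ne_empty.2 he
      ext x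
      simp only [Set.mem_univ, iff_true]
      exact (reach s x (hconn.preconnected s x)).1 hs
  · exact fun h => switchSet_trivial G h

/-- Inverse of a switching relabelling. -/
lemma relabel_inv {G : Dgraph V} {γ : Equiv.Perm V} {S : Set V}
    (hγ : G.relabel γ = G.switchSet S) : G.relabel γ⁻¹ = G.switchSet {x | γ x ∈ S} := by
  have h1 : (G.relabel γ).relabel γ⁻¹ = G := by
    rw [relabel_relabel, inv_mul_cancel, relabel_one]
  rw [hγ, relabel_switchSet] at h1
  have h2 := congrArg (fun H => Dgraph.switchSet H {x | (Equiv.symm γ⁻¹) x ∈ S}) h1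
  simp only [switchSet_switchSet] at h2
  have h3 : {x : V | ¬True} = (∅ : Set V) := by ext x; simp
  rw [h3, switchSet_empty] at h2
  have hsym : {x | (Equiv.symm γ⁻¹) x ∈ S} = {x | γ x ∈ S} := by ext x; simp [Equiv.Perm.inv_def]
  rw [hsym] at h2
  exact h2

/-- Key computation: composing two "switching relabellings". -/
lemma relabel_inv_mul {G : Dgraph V} {γ δ : Equiv.Perm V} {S T : Set V}
    (hγ : G.relabel γ = G.switchSet S) (hδ : G.relabel δ = G.switchSet T) :
    G.relabel (γ⁻¹ * δ) = G.switchSet {x | ¬(γ x ∈ S ↔ γ x ∈ T)} := by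
  have hinv := relabel_inv hγ
  calc G.relabel (γ⁻¹ * δ) = (G.relabel δ).relabel γ⁻¹ := (relabel_relabel G γ⁻¹ δ).symm
    _ = (G.switchSet T).relabel γ⁻¹ := by rw [hδ]
    _ = (G.relabel γ⁻¹).switchSet {x | (Equiv.symm γ⁻¹) x ∈ T} := relabel_switchSet G T γ⁻¹
    _ = (G.switchSet {x | γ x ∈ S}).switchSet {x | γ x ∈ T} := by
        rw [hinv]
        have h4 : {x | (Equiv.symm γ⁻¹) x ∈ T} = {x | γ x ∈ T} := by ext x; simp [Equiv.Perm.inv_def]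
        rw [h4]
    _ = G.switchSet {x | ¬(γ x ∈ S ↔ γ x ∈ T)} := by
        simp only [switchSet_switchSet, Set.mem_setOf_eq]

/-- The group of permutations that realize some set-switching of `G`. -/
def swGroup (G : Dgraph V) : Subgroup (Equiv.Perm V) where
  carrier := {γ | ∃ S : Set V, G.relabel γ = G.switchSet S}
  one_mem' := ⟨∅, by rw [relabel_one, switchSet_empty]⟩
  mul_mem' := by
    rintro γ δ ⟨S, hS⟩ ⟨T, hT⟩
    refine ⟨{x | ¬(x ∈ S ↔ x ∈ {x | γ.symm x ∈ T})}, ?_⟩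
    rw [← relabel_relabel, hT, relabel_switchSet, hS, switchSet_switchSet]
  inv_mem' := by
    rintro γ ⟨S, hS⟩
    exact ⟨_, relabel_inv hS⟩

/-- The automorphism group of `G`. -/
def autGroup (G : Dgraph V) : Subgroup (Equiv.Perm V) where
  carrier := {γ | G.relabel γ = G}
  one_mem' := relabel_one G
  mul_mem' := by
    intro γ δ hγ hδ
    show G.relabel (γ * δ) = G
    rw [← relabel_relabel, hδ, hγ]
  inv_mem' := by
    intro γ hγ
    show G.relabel γ⁻¹ = G
    have : (G.relabel γ).relabel γ⁻¹ = G := by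
      rw [relabel_relabel, inv_mul_cancel, relabel_one]
    rw [hγ] at this
    exact this

end Dgraph


namespace Dgraph

variable {V : Type*}

lemma exists_relabel_switchSet [Fintype V] (D : Dgraph V) (hst : SwitchStable D)
    (s : Finset V) : ∃ γ : Equiv.Perm V, D.relabel γ = D.switchSet ↑s := by
  classical
  induction s using Finset.induction_on with
  | empty =>
    refine ⟨1, ?_⟩
    rw [relabel_one, Finset.coe_empty, switchSet_empty]
  | @insert a s ha ih =>
    obtain ⟨γ', h'⟩ := ih
    obtain ⟨e, he⟩ := hst (γ'.symm a)
    have hδ : D.relabel e.symm = D.switchSet {γ'.symm a} := by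
      rw [← switchV_eq_switchSet]
      apply ext'_s10
      intro x y
      simp only [relabel, Equiv.symm_symm]
      exact (he x y).symm
    refine ⟨γ' * e.symm, ?_⟩
    rw [← relabel_relabel, hδ, relabel_switchSet, h', switchSet_switchSet]
    congr 1
    ext x
    simp only [Set.mem_setOf_eq, Set.mem_singleton_iff, Finset.coe_insert, Set.mem_insert_iff,
      Finset.mem_coe, EmbeddingLike.apply_eq_iff_eq]
    by_cases hx : x = a
    · subst hx; simp [ha]
    · simp [hx]

end Dgraph

lemma sum_digits_two_pos : ∀ n : ℕ, 0 < n → 0 < (Nat.digits 2 n).sum := by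
  intro n
  induction n using Nat.strong_induction_on with
  | _ n ih =>
    intro hn
    rw [Nat.digits_def' (by norm_num : (1:ℕ) < 2) hn, List.sum_cons]
    rcases Nat.eq_zero_or_pos (n / 2) with h | h
    · have : n % 2 = 1 := by omega
      omega
    · have := ih (n / 2) (by omega) h
      omega

lemma pow_two_of_digitSum_le : ∀ n : ℕ, 1 ≤ n → (Nat.digits 2 n).sum ≤ 1 → ∃ k, n = 2 ^ k := by
  intro n
  induction n using Nat.strong_induction_on with
  | _ n ih =>
    intro h1 h2
    rcases eq_or_lt_of_le h1 with h | h
    · exact ⟨0, h.symm⟩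
    · have hd : Nat.digits 2 n = n % 2 :: Nat.digits 2 (n / 2) :=
        Nat.digits_def' (by norm_num) (by omega)
      rw [hd, List.sum_cons] at h2
      have hhalf : 1 ≤ n / 2 := by omega
      rcases Nat.even_or_odd n with he | ho
      · have hm : n % 2 = 0 := Nat.even_iff.1 he
        obtain ⟨k, hk⟩ := ih (n / 2) (by omega) hhalf (by omega)
        exact ⟨k + 1, by rw [pow_succ]; omega⟩
      · have hm : n % 2 = 1 := Nat.odd_iff.1 ho
        have := sum_digits_two_pos (n / 2) hhalf
        omega

lemma logic_aux {V : Type*} (v0 : V) (P Q : V → Prop) :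
    (∀ x : {x : V // x ≠ v0}, (¬(P x ↔ P v0) ↔ ¬(Q x ↔ Q v0))) ↔
      ((∀ y, P y ↔ Q y) ∨ ∀ y, ¬(P y ↔ Q y)) := by
  classical
  constructor
  · intro h
    by_cases h0 : P v0 ↔ Q v0
    · left
      intro y
      by_cases hy : y = v0
      · subst hy; exact h0
      · have := h ⟨y, hy⟩; tauto
    · right
      intro y
      by_cases hy : y = v0
      · subst hy; exact h0
      · have := h ⟨y, hy⟩; tauto
  · rintro (h | h) x
    · have h1 := h x; have h2 := h v0; tauto
    · have h1 := h x; have h2 := h v0; tauto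


open Dgraph in
/-- If `D` is a connected switching-stable oriented graph on `n` vertices, then
`2^(n-1)` divides `n!`; in particular `n` is a power of `2`. -/
theorem switchStable_card_pow_two {V : Type*} [Fintype V] (D : Dgraph V)
    (hor : IsOriented D) (hconn : D.underlying.Connected) (hst : SwitchStable D) :
    2 ^ (Fintype.card V - 1) ∣ (Fintype.card V).factorial ∧
      ∃ k : ℕ, Fintype.card V = 2 ^ k := by
  classical
  obtain ⟨v0⟩ := hconn.nonempty
  have hmem : ∀ γ : D.swGroup, ∃ S : Set V, D.relabel ↑γ = D.switchSet S := fun γ => γ.2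
  let Sof : D.swGroup → Set V := fun γ => Classical.choose (hmem γ)
  have hSof : ∀ γ : D.swGroup, D.relabel ↑γ = D.switchSet (Sof γ) :=
    fun γ => Classical.choose_spec (hmem γ)
  let c : D.swGroup → ({x : V // x ≠ v0} → Prop) :=
    fun γ x => ¬((x : V) ∈ Sof γ ↔ v0 ∈ Sof γ)
  have key : ∀ γ δ : D.swGroup,
      (c γ = c δ ↔ (γ⁻¹ * δ) ∈ (D.autGroup).subgroupOf D.swGroup) := by
    intro γ δ
    rw [Subgroup.mem_subgroupOf]
    have hmemA : ((γ⁻¹ * δ : D.swGroup) : Equiv.Perm V) ∈ D.autGroup ↔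
        D.relabel ((↑γ : Equiv.Perm V)⁻¹ * ↑δ) = D := Iff.rfl
    rw [hmemA, relabel_inv_mul (hSof γ) (hSof δ), switchSet_eq_self_iff hor hconn]
    rw [Set.eq_empty_iff_forall_notMem, Set.eq_univ_iff_forall]
    simp only [Set.mem_setOf_eq, not_not]
    have e1 : (∀ x, ((↑γ : Equiv.Perm V) x ∈ Sof γ ↔ (↑γ : Equiv.Perm V) x ∈ Sof δ)) ↔
        (∀ y, (y ∈ Sof γ ↔ y ∈ Sof δ)) :=
      ⟨fun h y => by simpa using h ((↑γ : Equiv.Perm V)⁻¹ y), fun h x => h _⟩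
    have e2 : (∀ x, ¬((↑γ : Equiv.Perm V) x ∈ Sof γ ↔ (↑γ : Equiv.Perm V) x ∈ Sof δ)) ↔
        (∀ y, ¬(y ∈ Sof γ ↔ y ∈ Sof δ)) :=
      ⟨fun h y => by simpa using h ((↑γ : Equiv.Perm V)⁻¹ y), fun h x => h _⟩
    have hc : (c γ = c δ) ↔ ∀ x : {x : V // x ≠ v0},
        (¬((x : V) ∈ Sof γ ↔ v0 ∈ Sof γ) ↔ ¬((x : V) ∈ Sof δ ↔ v0 ∈ Sof δ)) :=
      ⟨fun h x => iff_of_eq (congrFun h x), fun h => funext fun x => propext (h x)⟩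
    rw [hc]
    exact (logic_aux v0 (fun y => y ∈ Sof γ) (fun y => y ∈ Sof δ)).trans
      (or_congr e1.symm e2.symm)
  have csurj : Function.Surjective c := by
    intro g
    set A : Set V := {x | ∃ h : x ≠ v0, g ⟨x, h⟩} with hA
    have hv0A : v0 ∉ A := by rintro ⟨h, -⟩; exact h rfl
    obtain ⟨γ0, hγ0⟩ := exists_relabel_switchSet D hst A.toFinset
    rw [Set.coe_toFinset] at hγ0
    have hγmem : γ0 ∈ D.swGroup := ⟨A, hγ0⟩
    refine ⟨⟨γ0, hγmem⟩, ?_⟩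
    set γ : D.swGroup := ⟨γ0, hγmem⟩ with hγdef
    have h1 : D.relabel ((↑γ : Equiv.Perm V)⁻¹ * ↑γ) =
        D.switchSet {x | ¬((↑γ : Equiv.Perm V) x ∈ Sof γ ↔ (↑γ : Equiv.Perm V) x ∈ A)} :=
      relabel_inv_mul (hSof γ) hγ0
    rw [inv_mul_cancel, relabel_one] at h1
    have h2 := (switchSet_eq_self_iff hor hconn _).1 h1.symm
    have h3 : (∀ y, (y ∈ Sof γ ↔ y ∈ A)) ∨ (∀ y, ¬(y ∈ Sof γ ↔ y ∈ A)) := by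
      rcases h2 with h2 | h2
      · left; intro y
        have := Set.eq_empty_iff_forall_notMem.1 h2 ((↑γ : Equiv.Perm V)⁻¹ y)
        simpa using this
      · right; intro y
        have := Set.eq_univ_iff_forall.1 h2 ((↑γ : Equiv.Perm V)⁻¹ y)
        simpa using this
    funext x
    apply propext
    obtain ⟨xv, hxv⟩ := x
    have hxA : (xv ∈ A) ↔ g ⟨xv, hxv⟩ := ⟨fun ⟨_, hg⟩ => hg, fun hg => ⟨hxv, hg⟩⟩
    show ¬(xv ∈ Sof γ ↔ v0 ∈ Sof γ) ↔ g ⟨xv, hxv⟩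
    rcases h3 with h3 | h3
    · have hx := h3 xv; have hv := h3 v0
      tauto
    · have hx := h3 xv; have hv := h3 v0
      tauto
  set Hsub := (D.autGroup).subgroupOf D.swGroup with hH
  let F : D.swGroup ⧸ Hsub → ({x : V // x ≠ v0} → Prop) :=
    Quotient.lift c fun a b hab => (key a b).2 (QuotientGroup.leftRel_apply.1 hab)
  have Fsurj : Function.Surjective F := by
    intro g
    obtain ⟨γ, hγ⟩ := csurj g
    exact ⟨QuotientGroup.mk γ, hγ⟩
  have Finj : Function.Injective F := by
    intro a b
    refine Quotient.inductionOn₂ a b ?_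
    intro x y h
    exact Quotient.sound (QuotientGroup.leftRel_apply.2 ((key x y).1 h))
  have hcardT : Nat.card ({x : V // x ≠ v0} → Prop) = 2 ^ (Fintype.card V - 1) := by
    rw [Nat.card_fun]
    congr 1
    · rw [Nat.card_eq_fintype_card, Fintype.card_prop]
    · rw [Nat.card_eq_fintype_card]
      rw [Fintype.card_subtype_compl (fun x => x = v0), Fintype.card_subtype_eq]
  have hQ : Nat.card (D.swGroup ⧸ Hsub) = 2 ^ (Fintype.card V - 1) := by
    rw [Nat.card_congr (Equiv.ofBijective F ⟨Finj, Fsurj⟩), hcardT]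
  have hΓcard : Nat.card D.swGroup = Nat.card (D.swGroup ⧸ Hsub) * Nat.card Hsub :=
    Subgroup.card_eq_card_quotient_mul_card_subgroup Hsub
  have hd1 : 2 ^ (Fintype.card V - 1) ∣ Nat.card D.swGroup :=
    ⟨Nat.card Hsub, by rw [hΓcard, hQ]⟩
  have hd2 : Nat.card D.swGroup ∣ (Fintype.card V).factorial := by
    have h := Subgroup.card_subgroup_dvd_card D.swGroup
    have h2 : Nat.card (Equiv.Perm V) = (Fintype.card V).factorial := by
      rw [Nat.card_eq_fintype_card, Fintype.card_perm]
    rwa [h2] at h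
  have part1 : 2 ^ (Fintype.card V - 1) ∣ (Fintype.card V).factorial := hd1.trans hd2
  refine ⟨part1, ?_⟩
  haveI : Fact (Nat.Prime 2) := ⟨Nat.prime_two⟩
  have hn1 : 1 ≤ Fintype.card V := Fintype.card_pos_iff.2 ⟨v0⟩
  have hval : (2 - 1) * padicValNat 2 (Nat.factorial (Fintype.card V)) =
      Fintype.card V - (Nat.digits 2 (Fintype.card V)).sum :=
    sub_one_mul_padicValNat_factorial (Fintype.card V)
  have hle : Fintype.card V - 1 ≤ padicValNat 2 (Nat.factorial (Fintype.card V)) := by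
    have h := (Nat.Prime.pow_dvd_iff_le_factorization Nat.prime_two
      (Nat.factorial_ne_zero (Fintype.card V))).1 part1
    rwa [Nat.factorization_def _ Nat.prime_two] at h
  have hsle : (Nat.digits 2 (Fintype.card V)).sum ≤ Fintype.card V :=
    Nat.digit_sum_le 2 (Fintype.card V)
  have hsum1 : (Nat.digits 2 (Fintype.card V)).sum ≤ 1 := by omega
  exact pow_two_of_digitSum_le (Fintype.card V) hn1 hsum1
end
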